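/- Fix a cost vector $\omega$ and a tie-breaking term order, and let $\mathcal{G}_{A,\succ}$ be the corresponding reduced Gröbner basis of $I_A$. For each right-hand side $b \in \mathbb{N}(A)$, the directed graph $G_{A,\omega,b}$, whose vertices are the feasible solutions of $IP_{A,\omega}(b)$ and which has a directed edge from $v$ to $u$ whenever $x^{(v-u)_+} - x^{(v-u)_-} \in \mathcal{G}_{A,\succ}$, is a connected acyclic directed graph with a unique sink, and this sink is the optimal solution of $IP_{A,\omega}(b)$. -/

import Mathlib

open MvPolynomial

noncomputable section

universe u

variable {α β : Type*} [Fintype α] [Fintype β]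

/-- The Laurent monomial `t^a` in the group algebra `ℂ[ℤ^α]` (the Laurent polynomial ring). -/
def laurentMonomial (a : α → ℤ) : AddMonoidAlgebra ℂ (α →₀ ℤ) :=
  AddMonoidAlgebra.single (Finsupp.equivFunOnFinite.symm a) 1

/-- The monomial map `φ_A : x_j ↦ t^{a_j}` where `a_j` is the `j`-th column of `A`. -/
def phiMap (A : Matrix α β ℤ) : MvPolynomial β ℂ →ₐ[ℂ] AddMonoidAlgebra ℂ (α →₀ ℤ) :=
  MvPolynomial.aeval fun j => laurentMonomial fun i => A i j

/-- The toric ideal `I_A`, the kernel of `φ_A`. -/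
def toricIdeal (A : Matrix α β ℤ) : Ideal (MvPolynomial β ℂ) :=
  RingHom.ker (phiMap A).toRingHom

/-- The leading monomial (exponent vector) of `f` with respect to a monomial order. -/
def leadMon (m : MonomialOrder β) (f : MvPolynomial β ℂ) : β →₀ ℕ :=
  m.toSyn.symm (f.support.sup m.toSyn)

/-- The leading coefficient of `f` with respect to a monomial order. -/
def leadCoeff (m : MonomialOrder β) (f : MvPolynomial β ℂ) : ℂ := f.coeff (leadMon m f)

/-- `G` is a Gröbner basis of `I`: a finite set of nonzero elements of `I` whose leading
monomials generate the initial ideal of `I` (i.e. the leading monomial of every nonzero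
element of `I` is divisible by the leading monomial of some element of `G`). -/
def IsGroebnerBasis (m : MonomialOrder β) (I : Ideal (MvPolynomial β ℂ))
    (G : Set (MvPolynomial β ℂ)) : Prop :=
  G.Finite ∧ (∀ g ∈ G, g ∈ I ∧ g ≠ 0) ∧
    ∀ f ∈ I, f ≠ 0 → ∃ g ∈ G, leadMon m g ≤ leadMon m f

/-- `G` is the reduced Gröbner basis of `I`: a Gröbner basis, all of whose elements are monic,
such that no monomial occurring in an element of `G` is divisible by the leading monomial of
another element of `G`. -/
def IsReducedGroebnerBasis (m : MonomialOrder β) (I : Ideal (MvPolynomial β ℂ))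
    (G : Set (MvPolynomial β ℂ)) : Prop :=
  IsGroebnerBasis m I G ∧ (∀ g ∈ G, leadCoeff m g = 1) ∧
    ∀ g ∈ G, ∀ g' ∈ G, g' ≠ g → ∀ c ∈ g.support, ¬ leadMon m g' ≤ c

/-- The positive part `w⁺` of an integer vector, as an exponent vector. -/
def posPart (w : β → ℤ) : β →₀ ℕ := Finsupp.equivFunOnFinite.symm fun i => (w i).toNat

/-- The negative part `w⁻` of an integer vector, as an exponent vector. -/
def negPart (w : β → ℤ) : β →₀ ℕ := Finsupp.equivFunOnFinite.symm fun i => (-(w i)).toNat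

/-- The binomial `x^{w⁺} - x^{w⁻}` associated to an integer vector `w`. -/
def binom (w : β → ℤ) : MvPolynomial β ℂ := monomial (posPart w) 1 - monomial (negPart w) 1

/-- A circuit of `A`: a nonzero integer vector in `ker A` with coprime entries whose support
is minimal with respect to inclusion among supports of nonzero elements of `ker A`. -/
def IsCircuit (A : Matrix α β ℤ) (u : β → ℤ) : Prop :=
  u ≠ 0 ∧ A.mulVec u = 0 ∧ Finset.gcd Finset.univ u = 1 ∧
    ∀ v : β → ℤ, v ≠ 0 → A.mulVec v = 0 →
      {i | v i ≠ 0} ⊆ {i | u i ≠ 0} → {i | v i ≠ 0} = {i | u i ≠ 0}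

/-- A sign pattern `ρ ∈ {+1,-1}^n`. -/
def IsSignPattern (ρ : β → ℤ) : Prop := ∀ i, ρ i = 1 ∨ ρ i = -1

/-- Membership in `H_ρ = ℝ^n_ρ ∩ ker_ℤ(A)`: integer kernel elements conforming to the sign
pattern `ρ`. -/
def MemH (A : Matrix α β ℤ) (ρ : β → ℤ) (w : β → ℤ) : Prop :=
  A.mulVec w = 0 ∧ ∀ i, 0 ≤ ρ i * w i

/-- `w` belongs to the Hilbert basis of the pointed cone `H_ρ`: it is a nonzero element of
`H_ρ` which cannot be written as the sum of two nonzero elements of `H_ρ` (equivalently, it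
belongs to the unique minimal generating set of the monoid `H_ρ`). -/
def IsHilbertBasisElem (A : Matrix α β ℤ) (ρ : β → ℤ) (w : β → ℤ) : Prop :=
  MemH A ρ w ∧ w ≠ 0 ∧
    ¬ ∃ a b : β → ℤ, MemH A ρ a ∧ MemH A ρ b ∧ a ≠ 0 ∧ b ≠ 0 ∧ w = a + b

/-- `w` is a Graver basis vector of `A`: a member of the Hilbert basis of `H_ρ` for some
sign pattern `ρ`. -/
def IsGraverVector (A : Matrix α β ℤ) (w : β → ℤ) : Prop :=
  ∃ ρ : β → ℤ, IsSignPattern ρ ∧ IsHilbertBasisElem A ρ w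

/-- The Graver basis `Gr_A` of the toric ideal `I_A`, as a set of binomials. -/
def graverBasis (A : Matrix α β ℤ) : Set (MvPolynomial β ℂ) :=
  { p | ∃ w : β → ℤ, IsGraverVector A w ∧ p = binom w }

/-- The degree of the binomial `x^{w⁺} - x^{w⁻}`, namely `max(Σ w⁺, Σ w⁻)`. -/
def degZ (w : β → ℤ) : ℕ := max (∑ i, (w i).toNat) (∑ i, (-(w i)).toNat)

/-- The columns of `A` generate a pointed cone. -/
def PointedCone' (A : Matrix α β ℤ) : Prop :=
  ∀ c : β → ℚ, (∀ i, 0 ≤ c i) → (A.map (Int.cast : ℤ → ℚ)).mulVec c = 0 → c = 0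

/-- The row span of `A` contains the all-ones vector. -/
def RowSpanOne (A : Matrix α β ℤ) : Prop :=
  ∃ w : α → ℚ, (A.map (Int.cast : ℤ → ℚ)).vecMul w = fun _ => 1

/-- The universal Gröbner basis of an ideal: the union of its reduced Gröbner bases over
all term orders. -/
def universalGroebnerBasis {γ : Type u} [Fintype γ] (I : Ideal (MvPolynomial γ ℂ)) :
    Set (MvPolynomial γ ℂ) :=
  { p | ∃ (m : MonomialOrder.{u, u} γ) (G : Set (MvPolynomial γ ℂ)),
      IsReducedGroebnerBasis m I G ∧ p ∈ G }

/-- The initial ideal of `I` with respect to a monomial order: the monomial ideal generated by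
the leading monomials of the nonzero elements of `I`. -/
def initialIdeal (m : MonomialOrder β) (I : Ideal (MvPolynomial β ℂ)) :
    Ideal (MvPolynomial β ℂ) :=
  Ideal.span { p | ∃ f ∈ I, f ≠ 0 ∧ p = monomial (leadMon m f) (1 : ℂ) }

/-- `x` is a feasible solution of `IP_{A,ω}(b)`: a nonnegative integer vector with `Ax = b`. -/
def Feasible {α β : Type*} [Fintype α] [Fintype β] (A : Matrix α β ℤ) (b : α → ℤ)
    (x : β → ℕ) : Prop :=
  A.mulVec (fun i => (x i : ℤ)) = b

/-- The cost `ω · x` of a solution. -/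
def ipCost {β : Type*} [Fintype β] (ω : β → ℝ) (x : β → ℕ) : ℝ := ∑ i, ω i * x i

/-- `x` is an optimal solution of `IP_{A,ω}(b)`. -/
def IsOptimalSol {α β : Type*} [Fintype α] [Fintype β] (A : Matrix α β ℤ) (ω : β → ℝ)
    (b : α → ℤ) (x : β → ℕ) : Prop :=
  Feasible A b x ∧ ∀ y : β → ℕ, Feasible A b y → ipCost ω x ≤ ipCost ω y

/-- The directed edge relation of the graph `G_{A,ω,b}`: there is an edge from `v` to `u`
whenever `x^{(v-u)⁺} - x^{(v-u)⁻}` belongs to the reduced Gröbner basis `G`. -/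
def ipEdge {β : Type*} [Fintype β] (G : Set (MvPolynomial β ℂ)) (v u : β → ℕ) : Prop :=
  binom (fun i => (v i : ℤ) - (u i : ℤ)) ∈ G


/-! ### Auxiliary lemmas -/

namespace IPAux

open Finsupp

/-- View a function `β → ℕ` as a finitely supported function. -/
def ex (x : β → ℕ) : β →₀ ℕ := Finsupp.equivFunOnFinite.symm x

@[simp] lemma ex_apply (x : β → ℕ) (i : β) : ex x i = x i := rfl

lemma ex_injective : Function.Injective (ex (β := β)) :=
  Finsupp.equivFunOnFinite.symm.injective

/-- disambiguated positive part -/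
def pp (w : β → ℤ) : β →₀ ℕ := posPart w

/-- disambiguated negative part -/
def np (w : β → ℤ) : β →₀ ℕ := negPart w

@[simp] lemma pp_apply (w : β → ℤ) (i : β) : pp w i = (w i).toNat := rfl

@[simp] lemma np_apply (w : β → ℤ) (i : β) : np w i = (-(w i)).toNat := rfl

lemma binom_def (w : β → ℤ) : binom w = monomial (pp w) 1 - monomial (np w) 1 := rfl

lemma phiMap_monomial (A : Matrix α β ℤ) (s : β →₀ ℕ) (r : ℂ) :
    phiMap A (monomial s r) =
      AddMonoidAlgebra.single (Finsupp.equivFunOnFinite.symm (A.mulVec fun j => (s j : ℤ))) r := by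
  classical
  have key : ∀ j : β, (laurentMonomial fun i => A i j) ^ (s j) =
      AddMonoidAlgebra.single (Finsupp.equivFunOnFinite.symm fun i => (s j : ℤ) * A i j) (1 : ℂ) := by
    intro j
    rw [laurentMonomial, AddMonoidAlgebra.single_pow, one_pow]
    congr 1
    ext i
    simp [mul_comm]
  rw [phiMap, aeval_monomial, Finsupp.prod_fintype _ _ (fun j => pow_zero _)]
  simp_rw [key]
  rw [AddMonoidAlgebra.prod_single, Finset.prod_const_one]
  have hsum : (∑ j : β, Finsupp.equivFunOnFinite.symm fun i => (s j : ℤ) * A i j)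
      = Finsupp.equivFunOnFinite.symm (A.mulVec fun j => (s j : ℤ)) := by
    ext i
    rw [Finsupp.finset_sum_apply]
    simp [Matrix.mulVec, dotProduct, mul_comm]
  rw [hsum]
  rw [AddMonoidAlgebra.coe_algebraMap]
  show AddMonoidAlgebra.single 0 ((algebraMap ℂ ℂ) r) * AddMonoidAlgebra.single _ 1 = _
  rw [AddMonoidAlgebra.single_mul_single, zero_add, mul_one]
  rfl

lemma phiMap_coeff (A : Matrix α β ℤ) (g : MvPolynomial β ℂ) (k : α →₀ ℤ) :
    (phiMap A g).coeff k = ∑ c ∈ g.support,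
      Finsupp.single (Finsupp.equivFunOnFinite.symm (A.mulVec fun j => (c j : ℤ)))
        (g.coeff c) k := by
  conv_lhs => rw [← g.support_sum_monomial_coeff]
  rw [map_sum]
  simp_rw [phiMap_monomial]
  rw [AddMonoidAlgebra.coeff_sum, Finsupp.finset_sum_apply]
  simp only [AddMonoidAlgebra.coeff_single]

lemma mem_toricIdeal_pair (A : Matrix α β ℤ) {a c : β →₀ ℕ}
    (h : A.mulVec (fun j => (a j : ℤ)) = A.mulVec (fun j => (c j : ℤ))) :
    monomial a (1 : ℂ) - monomial c 1 ∈ toricIdeal A := by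
  have : phiMap A (monomial a (1 : ℂ) - monomial c 1) = 0 := by
    rw [map_sub, phiMap_monomial, phiMap_monomial, h, sub_self]
  exact this

lemma mulVec_eq_of_pair_mem (A : Matrix α β ℤ) {a c : β →₀ ℕ}
    (hm : monomial a (1 : ℂ) - monomial c 1 ∈ toricIdeal A) :
    A.mulVec (fun j => (a j : ℤ)) = A.mulVec (fun j => (c j : ℤ)) := by
  have h0 : phiMap A (monomial a (1 : ℂ) - monomial c 1) = 0 := hm
  rw [map_sub, phiMap_monomial, phiMap_monomial, sub_eq_zero] at h0
  have := AddMonoidAlgebra.single_left_injective (one_ne_zero (α := ℂ)) h0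
  exact Finsupp.equivFunOnFinite.symm.injective this

lemma toSyn_leadMon (m : MonomialOrder β) (f : MvPolynomial β ℂ) :
    m.toSyn (leadMon m f) = f.support.sup m.toSyn := by
  rw [leadMon, AddEquiv.apply_symm_apply]

lemma le_toSyn_leadMon {m : MonomialOrder β} {f : MvPolynomial β ℂ} {c : β →₀ ℕ}
    (hc : c ∈ f.support) : m.toSyn c ≤ m.toSyn (leadMon m f) := by
  rw [toSyn_leadMon]; exact Finset.le_sup hc

lemma leadMon_mem_support {m : MonomialOrder β} {f : MvPolynomial β ℂ} (hf : f ≠ 0) :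
    leadMon m f ∈ f.support := by
  obtain ⟨c, hc, he⟩ := Finset.exists_mem_eq_sup f.support
    (MvPolynomial.support_nonempty.mpr hf) m.toSyn
  rw [leadMon, he, AddEquiv.symm_apply_apply]
  exact hc

lemma coeff_pair_self {a c : β →₀ ℕ} (hac : a ≠ c) :
    (monomial a (1 : ℂ) - monomial c 1).coeff a = 1 := by
  classical
  rw [MvPolynomial.coeff_sub, MvPolynomial.coeff_monomial, MvPolynomial.coeff_monomial,
    if_pos rfl, if_neg (Ne.symm hac), sub_zero]

lemma coeff_pair_other {a c : β →₀ ℕ} (hac : a ≠ c) :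
    (monomial a (1 : ℂ) - monomial c 1).coeff c = -1 := by
  classical
  rw [MvPolynomial.coeff_sub, MvPolynomial.coeff_monomial, MvPolynomial.coeff_monomial,
    if_pos rfl, if_neg hac, zero_sub]

lemma binom_pair_ne_zero {a c : β →₀ ℕ} (hac : a ≠ c) :
    monomial a (1 : ℂ) - monomial c 1 ≠ 0 := by
  intro h
  have := coeff_pair_self hac
  rw [h, MvPolynomial.coeff_zero] at this
  exact one_ne_zero this.symm

lemma support_pair_cases {a c d : β →₀ ℕ}
    (hd : d ∈ (monomial a (1 : ℂ) - monomial c 1).support) : d = a ∨ d = c := by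
  classical
  have hd' := MvPolynomial.support_sub _ _ _ hd
  rcases Finset.mem_union.mp hd' with h | h
  · rw [MvPolynomial.support_monomial] at h
    simp only [if_neg (one_ne_zero (α := ℂ))] at h
    exact Or.inl (Finset.mem_singleton.mp h)
  · rw [MvPolynomial.support_monomial] at h
    simp only [if_neg (one_ne_zero (α := ℂ))] at h
    exact Or.inr (Finset.mem_singleton.mp h)

lemma leadMon_pair {m : MonomialOrder β} {a c : β →₀ ℕ} (h : m.toSyn c < m.toSyn a) :
    leadMon m (monomial a (1 : ℂ) - monomial c 1) = a := by
  have hac : a ≠ c := fun h' => absurd h (by rw [h']; exact lt_irrefl _)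
  apply m.toSyn.injective
  rw [toSyn_leadMon]
  apply le_antisymm
  · apply Finset.sup_le
    intro d hd
    rcases support_pair_cases hd with rfl | rfl
    · exact le_rfl
    · exact h.le
  · apply Finset.le_sup
    rw [MvPolynomial.mem_support_iff, coeff_pair_self hac]
    exact one_ne_zero

/-- The key structure theorem: every element of a reduced Gröbner basis of a toric ideal is a
binomial `x^{w⁺} - x^{w⁻}` with `Aw = 0`, whose leading monomial is `w⁺`. -/
theorem mem_G_binom (A : Matrix α β ℤ) {m : MonomialOrder β} {G : Set (MvPolynomial β ℂ)}
    (hG : IsReducedGroebnerBasis m (toricIdeal A) G) {g : MvPolynomial β ℂ} (hg : g ∈ G) :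
    ∃ w : β → ℤ, g = binom w ∧ A.mulVec w = 0 ∧ pp w = leadMon m g ∧
      m.toSyn (np w) < m.toSyn (pp w) := by
  classical
  obtain ⟨⟨hGfin, hGmem, hGdiv⟩, hmonic, hred⟩ := hG
  obtain ⟨hgI, hgne⟩ := hGmem g hg
  set a := leadMon m g with ha
  have hca : g.coeff a = 1 := hmonic g hg
  have haS : a ∈ g.support := leadMon_mem_support hgne
  -- find a second monomial with the same image
  have hphi : (phiMap A) g = 0 := hgI
  have hco : (phiMap A g).coeff (Finsupp.equivFunOnFinite.symm (A.mulVec fun j => (a j : ℤ))) = 0 := by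
    rw [hphi]; rfl
  rw [phiMap_coeff] at hco
  have hexc : ∃ c ∈ g.support, c ≠ a ∧
      A.mulVec (fun j => (c j : ℤ)) = A.mulVec (fun j => (a j : ℤ)) := by
    by_contra hnc
    push_neg at hnc
    rw [Finset.sum_eq_single_of_mem a haS] at hco
    · rw [Finsupp.single_eq_same, hca] at hco
      exact one_ne_zero hco
    · intro c hcS hca'
      exact Finsupp.single_eq_of_ne
        (fun heq => hnc c hcS hca' (Finsupp.equivFunOnFinite.symm.injective heq.symm))
  obtain ⟨c, hcS, hcne, hcA⟩ := hexc
  have hpairI : monomial a (1 : ℂ) - monomial c 1 ∈ toricIdeal A :=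
    mem_toricIdeal_pair A hcA.symm
  set h := g - (monomial a (1 : ℂ) - monomial c 1) with hh
  have hhI : h ∈ toricIdeal A := sub_mem hgI hpairI
  have hsupp : ∀ d ∈ h.support, d ∈ g.support ∧ d ≠ a := by
    intro d hd
    rw [MvPolynomial.mem_support_iff] at hd
    by_cases hda : d = a
    · exfalso
      apply hd
      subst hda
      rw [hh, MvPolynomial.coeff_sub, MvPolynomial.coeff_sub, hca,
        MvPolynomial.coeff_monomial, MvPolynomial.coeff_monomial,
        if_pos rfl, if_neg hcne]
      ring
    · refine ⟨?_, hda⟩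
      by_cases hdc : d = c
      · subst hdc; exact hcS
      · rw [MvPolynomial.mem_support_iff]
        intro h0
        apply hd
        rw [hh, MvPolynomial.coeff_sub, MvPolynomial.coeff_sub, h0,
          MvPolynomial.coeff_monomial, MvPolynomial.coeff_monomial,
          if_neg (fun h' => hda h'.symm), if_neg (fun h' => hdc h'.symm)]
        ring
  have hzero : h = 0 := by
    by_contra hne
    obtain ⟨g', hg', hle⟩ := hGdiv h hhI hne
    obtain ⟨heS, hea⟩ := hsupp _ (leadMon_mem_support hne)
    by_cases hgg : g' = g
    · subst hgg
      have h1 : m.toSyn a ≤ m.toSyn (leadMon m h) := m.toSyn_monotone hle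
      have h2 : m.toSyn (leadMon m h) ≤ m.toSyn a := le_toSyn_leadMon heS
      exact hea (m.toSyn.injective (le_antisymm h2 h1))
    · exact hred g hg g' hg' hgg _ heS hle
  have hgform : g = monomial a 1 - monomial c 1 := by
    have := sub_eq_zero.mp hzero
    exact this
  have hlt : m.toSyn c < m.toSyn a :=
    lt_of_le_of_ne (le_toSyn_leadMon hcS) (fun h' => hcne (m.toSyn.injective h'))
  have hacne : a ≠ c := fun h' => hcne h'.symm
  -- disjoint supports
  have hdisj : ∀ i, a i = 0 ∨ c i = 0 := by
    intro i
    by_contra hcon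
    push_neg at hcon
    obtain ⟨hai, hci⟩ := hcon
    set si : β →₀ ℕ := Finsupp.single i 1 with hsi
    have hsia : si ≤ a := by
      rw [Finsupp.le_def]
      intro j
      by_cases hij : i = j
      · subst hij
        rw [hsi, Finsupp.single_eq_same]
        exact Nat.pos_of_ne_zero hai
      · rw [hsi, Finsupp.single_eq_of_ne (Ne.symm hij)]
        exact Nat.zero_le _
    have hsic : si ≤ c := by
      rw [Finsupp.le_def]
      intro j
      by_cases hij : i = j
      · subst hij
        rw [hsi, Finsupp.single_eq_same]
        exact Nat.pos_of_ne_zero hci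
      · rw [hsi, Finsupp.single_eq_of_ne (Ne.symm hij)]
        exact Nat.zero_le _
    set a' := a - si with ha'
    set c' := c - si with hc'
    have haa : a' + si = a := tsub_add_cancel_of_le hsia
    have hcc : c' + si = c := tsub_add_cancel_of_le hsic
    have hane : a' ≠ c' := fun h' => hacne (by rw [← haa, ← hcc, h'])
    have ea : (fun j => ((a' : β →₀ ℕ) j : ℤ)) =
        (fun j => (a j : ℤ)) - (fun j => ((si : β →₀ ℕ) j : ℤ)) := by
      funext j
      have hj := Finsupp.le_def.mp hsia j
      rw [ha', Finsupp.tsub_apply]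
      show ((a j - si j : ℕ) : ℤ) = (a j : ℤ) - (si j : ℤ)
      omega
    have ec : (fun j => ((c' : β →₀ ℕ) j : ℤ)) =
        (fun j => (c j : ℤ)) - (fun j => ((si : β →₀ ℕ) j : ℤ)) := by
      funext j
      have hj := Finsupp.le_def.mp hsic j
      rw [hc', Finsupp.tsub_apply]
      show ((c j - si j : ℕ) : ℤ) = (c j : ℤ) - (si j : ℤ)
      omega
    have hAeq : A.mulVec (fun j => (a' j : ℤ)) = A.mulVec (fun j => (c' j : ℤ)) := by
      rw [ea, ec, Matrix.mulVec_sub, Matrix.mulVec_sub, hcA]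
    have hf'I : monomial a' (1 : ℂ) - monomial c' 1 ∈ toricIdeal A := mem_toricIdeal_pair A hAeq
    have hf'ne : monomial a' (1 : ℂ) - monomial c' 1 ≠ 0 := binom_pair_ne_zero hane
    obtain ⟨g'', hg'', hle⟩ := hGdiv _ hf'I hf'ne
    have heS := leadMon_mem_support (m := m) hf'ne
    have he' : leadMon m (monomial a' (1 : ℂ) - monomial c' 1) = a' ∨
        leadMon m (monomial a' (1 : ℂ) - monomial c' 1) = c' := by
      exact support_pair_cases heS
    have ha'le : a' ≤ a := tsub_le_self
    have hc'le : c' ≤ c := tsub_le_self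
    by_cases hgg : g'' = g
    · subst hgg
      rcases he' with he'' | he''
      · rw [he''] at hle
        have h2 : a i ≤ a' i := Finsupp.le_def.mp hle i
        have h3 : a' i = a i - si i := Finsupp.tsub_apply a si i
        rw [hsi, Finsupp.single_eq_same] at h3
        omega
      · rw [he''] at hle
        have := m.toSyn_monotone (hle.trans hc'le)
        exact absurd this (not_le.mpr hlt)
    · rcases he' with he'' | he''
      · rw [he''] at hle
        exact hred g hg g'' hg'' hgg a haS (hle.trans ha'le)
      · rw [he''] at hle
        exact hred g hg g'' hg'' hgg c hcS (hle.trans hc'le)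
  -- package as a binomial
  have hpa : pp (fun i => (a i : ℤ) - c i) = a := by
    ext i
    rw [pp_apply]
    rcases hdisj i with h' | h' <;> omega
  have hna : np (fun i => (a i : ℤ) - c i) = c := by
    ext i
    rw [np_apply]
    rcases hdisj i with h' | h' <;> omega
  refine ⟨fun i => (a i : ℤ) - c i, ?_, ?_, ?_, ?_⟩
  · rw [binom_def, hpa, hna, hgform]
  · have hw : (fun i => (a i : ℤ) - c i) = (fun j => (a j : ℤ)) - (fun j => (c j : ℤ)) := rfl
    rw [hw, Matrix.mulVec_sub, hcA, sub_self]
  · rw [hpa]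
  · rw [hpa, hna]
    exact hlt

lemma binom_basic (A : Matrix α β ℤ) {m : MonomialOrder β} {G : Set (MvPolynomial β ℂ)}
    (hG : IsReducedGroebnerBasis m (toricIdeal A) G) {w : β → ℤ} (h : binom w ∈ G) :
    A.mulVec w = 0 ∧ m.toSyn (np w) < m.toSyn (pp w) := by
  obtain ⟨hgI, hgne⟩ := hG.1.2.1 _ h
  have hmonic : leadCoeff m (binom w) = 1 := hG.2.1 _ h
  rw [binom_def] at hgI hgne
  have hpn : pp w ≠ np w := by
    intro h'
    apply hgne
    rw [h', sub_self]
  have hAeq : A.mulVec (fun j => ((pp w) j : ℤ)) =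
      A.mulVec (fun j => ((np w) j : ℤ)) := mulVec_eq_of_pair_mem A hgI
  constructor
  · have hw : w = (fun j => ((pp w) j : ℤ)) - (fun j => ((np w) j : ℤ)) := by
      funext j
      show w j = ((w j).toNat : ℤ) - ((-(w j)).toNat : ℤ)
      omega
    rw [hw, Matrix.mulVec_sub, hAeq, sub_self]
  · have hgne' : binom w ≠ 0 := by rw [binom_def]; exact hgne
    have hlm : leadMon m (binom w) = pp w ∨ leadMon m (binom w) = np w := by
      have hmem := leadMon_mem_support (m := m) hgne'
      rw [binom_def] at hmem
      rcases support_pair_cases hmem with h2 | h2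
      · left; rw [binom_def]; exact h2
      · right; rw [binom_def]; exact h2
    rcases hlm with h' | h'
    · refine lt_of_le_of_ne ?_ ?_
      · have hns : np w ∈ (binom w).support := by
          rw [binom_def, MvPolynomial.mem_support_iff, coeff_pair_other hpn]
          exact neg_ne_zero.mpr one_ne_zero
        have := le_toSyn_leadMon (m := m) hns
        rw [h'] at this
        exact this
      · intro h''
        exact hpn (m.toSyn.injective h'').symm
    · exfalso
      have h1 : (binom w).coeff (leadMon m (binom w)) = 1 := hmonic
      rw [h', binom_def, coeff_pair_other hpn] at h1
      have : (1 : ℂ) = -1 := h1.symm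
      norm_num at this
  
lemma edge_lt (A : Matrix α β ℤ) {m : MonomialOrder β} {G : Set (MvPolynomial β ℂ)}
    (hG : IsReducedGroebnerBasis m (toricIdeal A) G) {v u : β → ℕ}
    (h : ipEdge G v u) : m.toSyn (ex u) < m.toSyn (ex v) := by
  set w : β → ℤ := fun i => (v i : ℤ) - u i with hw
  have h2 := (binom_basic A hG h).2
  have hv : ex v = ex (fun i => min (v i) (u i)) + pp w := by
    ext i
    rw [Finsupp.add_apply, ex_apply, ex_apply, pp_apply]
    show (v i : ℕ) = min (v i) (u i) + ((v i : ℤ) - u i).toNat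
    omega
  have hu : ex u = ex (fun i => min (v i) (u i)) + np w := by
    ext i
    rw [Finsupp.add_apply, ex_apply, ex_apply, np_apply]
    show (u i : ℕ) = min (v i) (u i) + (-((v i : ℤ) - u i)).toNat
    omega
  rw [hv, hu, map_add, map_add]
  exact add_lt_add_right h2 _

end IPAux

/-- For every right-hand side `b ∈ ℕ(A)`, the graph `G_{A,ω,b}` on the feasible
solutions of `IP_{A,ω}(b)`, with a directed edge from `v` to `u` whenever
`x^{(v-u)⁺} - x^{(v-u)⁻} ∈ 𝒢_{A,≻}`, is connected (as an undirected graph), acyclic (as a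
directed graph), and has a unique sink, which is the optimal solution of `IP_{A,ω}(b)`. -/
theorem ip_graph_connected_acyclic_unique_sink (d n : ℕ) (A : Matrix (Fin d) (Fin n) ℤ)
    (hrank : A.rank = d) (hpointed : PointedCone' A) (hrow : RowSpanOne A)
    (ω : Fin n → ℝ) (m : MonomialOrder (Fin n))
    -- the term order `≻` refines the cost comparison given by `ω`
    (hcomp : ∀ u v : Fin n →₀ ℕ,
      (∑ i, ω i * (u i : ℝ)) < (∑ i, ω i * (v i : ℝ)) → m.toSyn u < m.toSyn v)
    -- `ω` is generic: every program in the family `IP_{A,ω}` has a unique optimal solution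
    (huniq : ∀ (b : Fin d → ℤ) (x y : Fin n → ℕ),
      IsOptimalSol A ω b x → IsOptimalSol A ω b y → x = y)
    (G : Set (MvPolynomial (Fin n) ℂ))
    (hG : IsReducedGroebnerBasis m (toricIdeal A) G)
    (b : Fin d → ℤ) (hb : ∃ x : Fin n → ℕ, Feasible A b x) :
    -- connected
    (∀ v u : Fin n → ℕ, Feasible A b v → Feasible A b u →
      Relation.ReflTransGen (fun a c => ipEdge G a c ∨ ipEdge G c a) v u) ∧
    -- acyclic
    (∀ v : Fin n → ℕ, Feasible A b v → ¬ Relation.TransGen (ipEdge G) v v) ∧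
    -- unique sink, which is the optimal solution
    (∃ x : Fin n → ℕ, Feasible A b x ∧ (∀ u, Feasible A b u → ¬ ipEdge G x u) ∧
      IsOptimalSol A ω b x ∧
      ∀ y : Fin n → ℕ, Feasible A b y → (∀ u, Feasible A b u → ¬ ipEdge G y u) → y = x) := by
  classical
  open IPAux in
  -- a feasible solution with minimal synonym value
  obtain ⟨x1, hx1⟩ := hb
  obtain ⟨s0, ⟨x0, hx0, hs0⟩, hmin⟩ := WellFounded.has_min wellFounded_lt
    {s : m.syn | ∃ x, Feasible A b x ∧ m.toSyn (ex x) = s} ⟨_, x1, hx1, rfl⟩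
  have hminx : ∀ y, Feasible A b y → ¬ m.toSyn (ex y) < m.toSyn (ex x0) := by
    intro y hy hlt
    exact hmin _ ⟨y, hy, rfl⟩ (hs0 ▸ hlt)
  have hcost : ∀ x : Fin n → ℕ, ipCost ω x = ∑ i, ω i * (((ex x) i : ℕ) : ℝ) := fun x => rfl
  have hopt : IsOptimalSol A ω b x0 := by
    refine ⟨hx0, fun y hy => ?_⟩
    by_contra hlt
    push_neg at hlt
    rw [hcost y, hcost x0] at hlt
    exact hminx y hy (hcomp _ _ hlt)
  have hsink : ∀ u, Feasible A b u → ¬ ipEdge G x0 u := fun u hu he =>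
    hminx u hu (edge_lt A hG he)
  -- the reduction step for non-minimal feasible solutions
  have hstep : ∀ y, Feasible A b y → y ≠ x0 →
      ∃ u, Feasible A b u ∧ ipEdge G y u ∧ m.toSyn (ex u) < m.toSyn (ex y) := by
    intro y hy hne'
    have hxy : m.toSyn (ex x0) < m.toSyn (ex y) := by
      rcases lt_trichotomy (m.toSyn (ex x0)) (m.toSyn (ex y)) with h | h | h
      · exact h
      · exact absurd (ex_injective (m.toSyn.injective h)).symm hne'
      · exact absurd h (hminx y hy)
    have hfI : monomial (ex y) (1 : ℂ) - monomial (ex x0) 1 ∈ toricIdeal A := by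
      apply mem_toricIdeal_pair A
      show A.mulVec (fun j => ((y j : ℕ) : ℤ)) = A.mulVec (fun j => ((x0 j : ℕ) : ℤ))
      rw [show A.mulVec (fun j => ((y j : ℕ) : ℤ)) = b from hy,
        show A.mulVec (fun j => ((x0 j : ℕ) : ℤ)) = b from hx0]
    have hfne : monomial (ex y) (1 : ℂ) - monomial (ex x0) 1 ≠ 0 :=
      binom_pair_ne_zero (fun h => hne' (ex_injective h))
    obtain ⟨g, hg, hle⟩ := hG.1.2.2 _ hfI hfne
    rw [leadMon_pair hxy] at hle
    obtain ⟨w, hform, hA0, hpm, _⟩ := mem_G_binom A hG hg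
    rw [← hpm] at hle
    have hple : ∀ i, (w i).toNat ≤ y i := by
      intro i
      have := Finsupp.le_def.mp hle i
      rw [pp_apply, ex_apply] at this
      exact this
    refine ⟨fun i => y i - (w i).toNat + (-(w i)).toNat, ?_, ?_, ?_⟩
    · show A.mulVec _ = b
      have hcoe : (fun i => ((y i - (w i).toNat + (-(w i)).toNat : ℕ) : ℤ)) =
          (fun i => (y i : ℤ)) - w := by
        funext i
        have := hple i
        show ((y i - (w i).toNat + (-(w i)).toNat : ℕ) : ℤ) = (y i : ℤ) - w i
        omega
      rw [hcoe, Matrix.mulVec_sub, hA0, sub_zero]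
      exact hy
    · show binom _ ∈ G
      have hdiff : (fun i => (y i : ℤ) - ((y i - (w i).toNat + (-(w i)).toNat : ℕ) : ℤ)) = w := by
        funext i
        have := hple i
        omega
      rw [hdiff, ← hform]
      exact hg
    · apply edge_lt A hG
      show binom _ ∈ G
      have hdiff : (fun i => (y i : ℤ) - ((y i - (w i).toNat + (-(w i)).toNat : ℕ) : ℤ)) = w := by
        funext i
        have := hple i
        omega
      rw [hdiff, ← hform]
      exact hg
  -- every feasible solution has a directed path to `x0`
  have hpath : ∀ v, Feasible A b v → Relation.ReflTransGen (ipEdge G) v x0 := by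
    have H : ∀ s : m.syn, ∀ v, Feasible A b v → m.toSyn (ex v) = s →
        Relation.ReflTransGen (ipEdge G) v x0 := by
      intro s
      induction s using WellFoundedLT.induction with
      | _ s ih =>
        intro v hv hs
        by_cases hvx : v = x0
        · subst hvx; exact Relation.ReflTransGen.refl
        · obtain ⟨u, hu, he, hlt⟩ := hstep v hv hvx
          exact Relation.ReflTransGen.head he (ih _ (hs ▸ hlt) u hu rfl)
    exact fun v hv => H _ v hv rfl
  refine ⟨?_, ?_, ?_⟩
  · -- connectivity
    intro v u hv hu
    have hsymm : Symmetric (fun a c => ipEdge G a c ∨ ipEdge G c a) := fun a c h => h.symm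
    have h1 : Relation.ReflTransGen (fun a c => ipEdge G a c ∨ ipEdge G c a) v x0 :=
      Relation.ReflTransGen.mono (r := ipEdge G) (p := fun a c => ipEdge G a c ∨ ipEdge G c a) (fun a c h => Or.inl h) v x0 (hpath v hv)
    have h2 : Relation.ReflTransGen (fun a c => ipEdge G a c ∨ ipEdge G c a) u x0 :=
      Relation.ReflTransGen.mono (r := ipEdge G) (p := fun a c => ipEdge G a c ∨ ipEdge G c a) (fun a c h => Or.inl h) u x0 (hpath u hu)
    exact h1.trans (Relation.ReflTransGen.mono (r := Function.swap (fun a c => ipEdge G a c ∨ ipEdge G c a)) (p := fun a c => ipEdge G a c ∨ ipEdge G c a) (fun a c h => hsymm h) x0 u (Relation.reflTransGen_swap.mpr h2))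
  · -- acyclicity
    intro v _ hcyc
    have hlt : ∀ p q : Fin n → ℕ, Relation.TransGen (ipEdge G) p q →
        m.toSyn (ex q) < m.toSyn (ex p) := by
      intro p q h
      induction h with
      | single h' => exact edge_lt A hG h'
      | tail _ h2 ih => exact (edge_lt A hG h2).trans ih
    exact lt_irrefl _ (hlt v v hcyc)
  · -- unique sink
    refine ⟨x0, hx0, hsink, hopt, ?_⟩
    intro y hy hysink
    by_contra hne'
    obtain ⟨u, hu, he, _⟩ := hstep y hy hne'
    exact hysink u hu he
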